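/- NRM has approximation ratio at most 2 for the maximum average group cost: for any profile r, (1/4) magc(x_ml, r) + (1/2) magc((x_ml + x_mr)/2, r) + (1/4) magc(x_mr, r) <= 2 * magc(y*, r), where y* is optimal for magc. -/

import Mathlib

open Finset

variable {n m : ℕ}

/-- Members of group `j`. -/
def grp (g : Fin n → Fin m) (j : Fin m) : Finset (Fin n) :=
  Finset.univ.filter (fun i => g i = j)

/-- Maximum total group cost. -/
noncomputable def mtgc (x : Fin n → ℝ) (g : Fin n → Fin m) (y : ℝ) : ℝ :=
  ⨆ j : Fin m, ∑ i ∈ grp g j, |y - x i|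

/-- Maximum average group cost. -/
noncomputable def magc (x : Fin n → ℝ) (g : Fin n → Fin m) (y : ℝ) : ℝ :=
  ⨆ j : Fin m, (∑ i ∈ grp g j, |y - x i|) / (grp g j).card

/-- Left median of a multiset of reals (`⌈k/2⌉`-th smallest). -/
noncomputable def medianOf (s : Multiset ℝ) : ℝ :=
  (s.sort (· ≤ ·)).getD ((Multiset.card s - 1) / 2) 0

/-- Left median of the locations of the members of group `j`. -/
noncomputable def groupMedian (x : Fin n → ℝ) (g : Fin n → Fin m) (j : Fin m) : ℝ :=
  medianOf ((grp g j).val.map x)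

/-- A largest group, ties broken by the smallest index. -/
noncomputable def majGroup (g : Fin n → Fin m) [NeZero m] : Fin m :=
  (Finset.univ.filter
    (fun j => ∀ k : Fin m, (grp g k).card ≤ (grp g j).card)).min' (by
      obtain ⟨b, -, hb⟩ :=
        Finset.exists_max_image Finset.univ (fun j => (grp g j).card) Finset.univ_nonempty
      exact ⟨b, Finset.mem_filter.mpr ⟨Finset.mem_univ _, fun k => hb k (Finset.mem_univ k)⟩⟩)

/-- Majority Group Deterministic Mechanism. -/
noncomputable def MGDM (x : Fin n → ℝ) (g : Fin n → Fin m) [NeZero m] : ℝ :=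
  groupMedian x g (majGroup g)

noncomputable def avgc (x : Fin n → ℝ) (g : Fin n → Fin m) (j : Fin m) (y : ℝ) : ℝ :=
  (∑ i ∈ grp g j, |y - x i|) / (grp g j).card

noncomputable def maxc (x : Fin n → ℝ) (g : Fin n → Fin m) (j : Fin m) (y : ℝ) : ℝ :=
  sSup ((fun i => |y - x i|) '' {i | g i = j})

noncomputable def minc (x : Fin n → ℝ) (g : Fin n → Fin m) (j : Fin m) (y : ℝ) : ℝ :=
  sInf ((fun i => |y - x i|) '' {i | g i = j})

noncomputable def IIF1 (x : Fin n → ℝ) (g : Fin n → Fin m) (y : ℝ) : ℝ :=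
  (⨆ j : Fin m, avgc x g j y) + ⨆ j : Fin m, (maxc x g j y - minc x g j y)
/-- Leftmost group median. -/
noncomputable def xml [NeZero m] (x : Fin n → ℝ) (g : Fin n → Fin m) : ℝ :=
  Finset.univ.inf' Finset.univ_nonempty (groupMedian x g)

/-- Rightmost group median. -/
noncomputable def xmr [NeZero m] (x : Fin n → ℝ) (g : Fin n → Fin m) : ℝ :=
  Finset.univ.sup' Finset.univ_nonempty (groupMedian x g)

/-- Expected distance from point `z` to the facility under NRM, which places
the facility at `x_ml` w.p. 1/4, at `x_mr` w.p. 1/4, and at their midpoint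
w.p. 1/2. -/
noncomputable def NRMcost [NeZero m] (x : Fin n → ℝ) (g : Fin n → Fin m) (z : ℝ) : ℝ :=
  1/4 * |xml x g - z| + 1/4 * |xmr x g - z| + 1/2 * |(xml x g + xmr x g) / 2 - z|
section AUX

lemma sorted_median_right {l : List ℝ} (hl : l.Pairwise (· ≤ ·)) (h0 : 0 < l.length) :
    l.length ≤ 2 * l.countP (fun y => decide (l.getD ((l.length - 1) / 2) 0 ≤ y)) := by
  set k := l.length with hk
  set p := (k - 1) / 2 with hp
  have hpk : p < k := by omega
  have hmd : l.getD p 0 = l.get ⟨p, hpk⟩ := by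
    rw [List.getD_eq_getElem?_getD, List.getElem?_eq_getElem hpk]; rfl
  have hdrop : ∀ a ∈ l.drop p, l.getD p 0 ≤ a := by
    intro a ha
    rw [List.mem_iff_getElem] at ha
    obtain ⟨i, hi, rfl⟩ := ha
    rw [List.getElem_drop, hmd]
    exact hl.rel_get_of_le (Fin.mk_le_mk.mpr (by omega))
  have h1 : (l.drop p).countP (fun y => decide (l.getD p 0 ≤ y)) = (l.drop p).length := by
    rw [List.countP_eq_length]
    intro a ha; simpa using hdrop a ha
  have h2 : (l.drop p).countP (fun y => decide (l.getD p 0 ≤ y)) ≤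
      l.countP (fun y => decide (l.getD p 0 ≤ y)) := by
    exact (List.drop_sublist p l).countP_le
  rw [List.length_drop] at h1
  omega

lemma sorted_median_left {l : List ℝ} (hl : l.Pairwise (· ≤ ·)) (h0 : 0 < l.length) :
    l.length ≤ 2 * l.countP (fun y => decide (y ≤ l.getD ((l.length - 1) / 2) 0)) := by
  set k := l.length with hk
  set p := (k - 1) / 2 with hp
  have hpk : p < k := by omega
  have hmd : l.getD p 0 = l.get ⟨p, hpk⟩ := by
    rw [List.getD_eq_getElem?_getD, List.getElem?_eq_getElem hpk]; rfl
  have htake : ∀ a ∈ l.take (p + 1), a ≤ l.getD p 0 := by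
    intro a ha
    rw [List.mem_iff_getElem] at ha
    obtain ⟨i, hi, rfl⟩ := ha
    rw [List.getElem_take]
    rw [hmd]
    have hi' : i < p + 1 := lt_of_lt_of_le hi (by simp [List.length_take])
    exact hl.rel_get_of_le (Fin.mk_le_mk.mpr (by omega))
  have h1 : (l.take (p + 1)).countP (fun y => decide (y ≤ l.getD p 0)) = (l.take (p + 1)).length := by
    rw [List.countP_eq_length]
    intro a ha; simpa using htake a ha
  have h2 : (l.take (p + 1)).countP (fun y => decide (y ≤ l.getD p 0)) ≤
      l.countP (fun y => decide (y ≤ l.getD p 0)) := by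
    exact (List.take_sublist (p + 1) l).countP_le
  rw [List.length_take] at h1
  omega

lemma median_count_right (x : Fin n → ℝ) (g : Fin n → Fin m) (j : Fin m)
    (h0 : (grp g j).Nonempty) :
    (grp g j).card ≤ 2 * ((grp g j).filter (fun i => groupMedian x g j ≤ x i)).card := by
  set s : Multiset ℝ := (grp g j).val.map x with hs
  set l : List ℝ := s.sort (· ≤ ·) with hl
  have hlen : l.length = (grp g j).card := by
    rw [hl, Multiset.length_sort, hs, Multiset.card_map]; rfl
  have hmd : groupMedian x g j = l.getD ((l.length - 1) / 2) 0 := by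
    rw [groupMedian, medianOf, hlen, ← hl, ← hs]
    congr 1
    rw [hs, Multiset.card_map]; rfl
  have hpos : 0 < l.length := by rw [hlen]; exact Finset.card_pos.mpr h0
  have key := sorted_median_right (Multiset.pairwise_sort s _) hpos
  rw [← hmd] at key
  have hcount : l.countP (fun y => decide (groupMedian x g j ≤ y)) =
      ((grp g j).filter (fun i => groupMedian x g j ≤ x i)).card := by
    have : s.countP (fun y => groupMedian x g j ≤ y) =
        l.countP (fun y => decide (groupMedian x g j ≤ y)) := by
      have he : (↑l : Multiset ℝ) = s := Multiset.sort_eq s _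
      rw [← he, Multiset.coe_countP]
    rw [← this, hs, Multiset.countP_map, Finset.card_filter]
    simp [Multiset.countP_eq_card_filter, Finset.filter_val, Finset.card_def]
  rw [hcount, hlen] at key
  exact key

lemma median_count_left (x : Fin n → ℝ) (g : Fin n → Fin m) (j : Fin m)
    (h0 : (grp g j).Nonempty) :
    (grp g j).card ≤ 2 * ((grp g j).filter (fun i => x i ≤ groupMedian x g j)).card := by
  set s : Multiset ℝ := (grp g j).val.map x with hs
  set l : List ℝ := s.sort (· ≤ ·) with hl
  have hlen : l.length = (grp g j).card := by
    rw [hl, Multiset.length_sort, hs, Multiset.card_map]; rfl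
  have hmd : groupMedian x g j = l.getD ((l.length - 1) / 2) 0 := by
    rw [groupMedian, medianOf, hlen, ← hl, ← hs]
    congr 1
    rw [hs, Multiset.card_map]; rfl
  have hpos : 0 < l.length := by rw [hlen]; exact Finset.card_pos.mpr h0
  have key := sorted_median_left (Multiset.pairwise_sort s _) hpos
  rw [← hmd] at key
  have hcount : l.countP (fun y => decide (y ≤ groupMedian x g j)) =
      ((grp g j).filter (fun i => x i ≤ groupMedian x g j)).card := by
    have : s.countP (fun y => y ≤ groupMedian x g j) =
        l.countP (fun y => decide (y ≤ groupMedian x g j)) := by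
      have he : (↑l : Multiset ℝ) = s := Multiset.sort_eq s _
      rw [← he, Multiset.coe_countP]
    rw [← this, hs, Multiset.countP_map, Finset.card_filter]
    simp [Multiset.countP_eq_card_filter, Finset.filter_val, Finset.card_def]
  rw [hcount, hlen] at key
  exact key

lemma grp_nonempty {g : Fin n → Fin m} (hg : Function.Surjective g) (j : Fin m) :
    (grp g j).Nonempty := by
  obtain ⟨i, hi⟩ := hg j
  exact ⟨i, by simp [grp, hi]⟩

lemma term_le_magc (x : Fin n → ℝ) (g : Fin n → Fin m) (j : Fin m) (y : ℝ) :
    (∑ i ∈ grp g j, |y - x i|) / (grp g j).card ≤ magc x g y :=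
  le_ciSup (f := fun j : Fin m => (∑ i ∈ grp g j, |y - x i|) / ((grp g j).card : ℝ))
    (Set.Finite.bddAbove (Set.finite_range _)) j

lemma magc_nonneg (x : Fin n → ℝ) (g : Fin n → Fin m) [NeZero m] (y : ℝ) :
    0 ≤ magc x g y :=
  le_trans (by positivity) (term_le_magc x g (Classical.arbitrary (Fin m)) y)

lemma magc_lip (x : Fin n → ℝ) {g : Fin n → Fin m} [NeZero m]
    (hg : Function.Surjective g) (y z : ℝ) :
    magc x g z ≤ magc x g y + |z - y| := by
  apply ciSup_le
  intro j
  have hk : 0 < ((grp g j).card : ℝ) := by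
    exact_mod_cast Finset.card_pos.mpr (grp_nonempty hg j)
  have h1 : (∑ i ∈ grp g j, |z - x i|) ≤
      (∑ i ∈ grp g j, |y - x i|) + (grp g j).card * |z - y| := by
    calc (∑ i ∈ grp g j, |z - x i|) ≤ ∑ i ∈ grp g j, (|y - x i| + |z - y|) := by
          apply Finset.sum_le_sum
          intro i _
          calc |z - x i| = |(y - x i) + (z - y)| := by ring_nf
            _ ≤ |y - x i| + |z - y| := abs_add_le _ _
      _ = (∑ i ∈ grp g j, |y - x i|) + (grp g j).card * |z - y| := by
          rw [Finset.sum_add_distrib, Finset.sum_const, nsmul_eq_mul]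
  calc (∑ i ∈ grp g j, |z - x i|) / (grp g j).card
      ≤ ((∑ i ∈ grp g j, |y - x i|) + (grp g j).card * |z - y|) / (grp g j).card := by
        gcongr
    _ = (∑ i ∈ grp g j, |y - x i|) / (grp g j).card + |z - y| := by
        rw [add_div, mul_div_cancel_left₀ _ hk.ne']
    _ ≤ magc x g y + |z - y| := by
        have := term_le_magc x g j y
        linarith

lemma magc_ge_right (x : Fin n → ℝ) {g : Fin n → Fin m} [NeZero m]
    (hg : Function.Surjective g) (s : ℝ) :
    (xmr x g - s) / 2 ≤ magc x g s := by
  obtain ⟨j, -, hj⟩ := Finset.exists_mem_eq_sup' (Finset.univ_nonempty (α := Fin m))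
    (groupMedian x g)
  have hj' : xmr x g = groupMedian x g j := hj
  rcases le_total (xmr x g) s with h | h
  · have := magc_nonneg x g s
    linarith
  · have h0 := grp_nonempty hg j
    have hcount := median_count_right x g j h0
    set S := (grp g j).filter (fun i => groupMedian x g j ≤ x i) with hS
    have hsum : (S.card : ℝ) * (xmr x g - s) ≤ ∑ i ∈ grp g j, |s - x i| := by
      calc (S.card : ℝ) * (xmr x g - s) = ∑ _i ∈ S, (xmr x g - s) := by
            rw [Finset.sum_const, nsmul_eq_mul]
        _ ≤ ∑ i ∈ S, |s - x i| := by
            apply Finset.sum_le_sum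
            intro i hi
            have h1 : groupMedian x g j ≤ x i := (Finset.mem_filter.mp hi).2
            have h2 : xmr x g ≤ x i := hj' ▸ h1
            rw [abs_sub_comm]
            calc xmr x g - s ≤ x i - s := by linarith
              _ ≤ |x i - s| := le_abs_self _
        _ ≤ ∑ i ∈ grp g j, |s - x i| :=
            Finset.sum_le_sum_of_subset_of_nonneg (Finset.filter_subset _ _)
              (fun i _ _ => abs_nonneg _)
    have hk : 0 < ((grp g j).card : ℝ) := by exact_mod_cast Finset.card_pos.mpr h0
    have hc : ((grp g j).card : ℝ) ≤ 2 * S.card := by exact_mod_cast hcount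
    refine le_trans ?_ (term_le_magc x g j s)
    rw [div_le_div_iff₀ (by norm_num) hk]
    nlinarith [sub_nonneg.mpr h]

lemma magc_ge_left (x : Fin n → ℝ) {g : Fin n → Fin m} [NeZero m]
    (hg : Function.Surjective g) (s : ℝ) :
    (s - xml x g) / 2 ≤ magc x g s := by
  obtain ⟨j, -, hj⟩ := Finset.exists_mem_eq_inf' (Finset.univ_nonempty (α := Fin m))
    (groupMedian x g)
  have hj' : xml x g = groupMedian x g j := hj
  rcases le_total s (xml x g) with h | h
  · have := magc_nonneg x g s
    linarith
  · have h0 := grp_nonempty hg j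
    have hcount := median_count_left x g j h0
    set S := (grp g j).filter (fun i => x i ≤ groupMedian x g j) with hS
    have hsum : (S.card : ℝ) * (s - xml x g) ≤ ∑ i ∈ grp g j, |s - x i| := by
      calc (S.card : ℝ) * (s - xml x g) = ∑ _i ∈ S, (s - xml x g) := by
            rw [Finset.sum_const, nsmul_eq_mul]
        _ ≤ ∑ i ∈ S, |s - x i| := by
            apply Finset.sum_le_sum
            intro i hi
            have h1 : x i ≤ groupMedian x g j := (Finset.mem_filter.mp hi).2
            have h2 : x i ≤ xml x g := hj' ▸ h1
            calc s - xml x g ≤ s - x i := by linarith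
              _ ≤ |s - x i| := le_abs_self _
        _ ≤ ∑ i ∈ grp g j, |s - x i| :=
            Finset.sum_le_sum_of_subset_of_nonneg (Finset.filter_subset _ _)
              (fun i _ _ => abs_nonneg _)
    have hk : 0 < ((grp g j).card : ℝ) := by exact_mod_cast Finset.card_pos.mpr h0
    have hc : ((grp g j).card : ℝ) ≤ 2 * S.card := by exact_mod_cast hcount
    refine le_trans ?_ (term_le_magc x g j s)
    rw [div_le_div_iff₀ (by norm_num) hk]
    nlinarith [sub_nonneg.mpr h]

lemma magc_anti_left (x : Fin n → ℝ) {g : Fin n → Fin m} [NeZero m]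
    (hg : Function.Surjective g) {z : ℝ} (hz : z ≤ xml x g) :
    magc x g (xml x g) ≤ magc x g z := by
  set a := xml x g with ha
  apply ciSup_le
  intro j
  refine le_trans ?_ (term_le_magc x g j z)
  have h0 := grp_nonempty hg j
  have hk : (0:ℝ) < ((grp g j).card : ℝ) := by
    exact_mod_cast Finset.card_pos.mpr h0
  rw [div_le_div_iff_of_pos_right hk]
  -- sum inequality
  have hma : a ≤ groupMedian x g j := Finset.inf'_le _ (Finset.mem_univ j)
  set S := (grp g j).filter (fun i => a ≤ x i) with hSdef
  set T := (grp g j).filter (fun i => ¬ a ≤ x i) with hTdef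
  have hcount := median_count_right x g j h0
  have hsub : (grp g j).filter (fun i => groupMedian x g j ≤ x i) ⊆ S :=
    Finset.monotone_filter_right _ (fun i _ hi => le_trans hma hi)
  have hST : (T.card : ℝ) ≤ S.card := by
    have h1 : S.card + T.card = (grp g j).card :=
      Finset.card_filter_add_card_filter_not _
    have h2 : ((grp g j).filter (fun i => groupMedian x g j ≤ x i)).card ≤ S.card :=
      Finset.card_le_card hsub
    have : T.card ≤ S.card := by omega
    exact_mod_cast this
  have hsplitA : (∑ i ∈ S, |a - x i|) + (∑ i ∈ T, |a - x i|) = ∑ i ∈ grp g j, |a - x i| :=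
    Finset.sum_filter_add_sum_filter_not _ _ _
  have hsplitZ : (∑ i ∈ S, |z - x i|) + (∑ i ∈ T, |z - x i|) = ∑ i ∈ grp g j, |z - x i| :=
    Finset.sum_filter_add_sum_filter_not _ _ _
  have hSsum : (∑ i ∈ S, |a - x i|) + S.card * (a - z) ≤ ∑ i ∈ S, |z - x i| := by
    have : (∑ i ∈ S, |a - x i|) + S.card * (a - z) = ∑ i ∈ S, (|a - x i| + (a - z)) := by
      rw [Finset.sum_add_distrib, Finset.sum_const, nsmul_eq_mul]
    rw [this]
    apply Finset.sum_le_sum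
    intro i hi
    have hx : a ≤ x i := (Finset.mem_filter.mp hi).2
    rw [abs_of_nonpos (by linarith), abs_of_nonpos (by linarith)]
    linarith
  have hTsum : (∑ i ∈ T, |a - x i|) ≤ (∑ i ∈ T, |z - x i|) + T.card * (a - z) := by
    have : (∑ i ∈ T, |z - x i|) + T.card * (a - z) = ∑ i ∈ T, (|z - x i| + (a - z)) := by
      rw [Finset.sum_add_distrib, Finset.sum_const, nsmul_eq_mul]
    rw [this]
    apply Finset.sum_le_sum
    intro i _
    calc |a - x i| = |(z - x i) + (a - z)| := by ring_nf
      _ ≤ |z - x i| + |a - z| := abs_add_le _ _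
      _ = |z - x i| + (a - z) := by
          rw [abs_of_nonneg (show (0:ℝ) ≤ a - z by linarith)]
  nlinarith [sub_nonneg.mpr hz]

lemma magc_anti_right (x : Fin n → ℝ) {g : Fin n → Fin m} [NeZero m]
    (hg : Function.Surjective g) {z : ℝ} (hz : xmr x g ≤ z) :
    magc x g (xmr x g) ≤ magc x g z := by
  set b := xmr x g with hb
  apply ciSup_le
  intro j
  refine le_trans ?_ (term_le_magc x g j z)
  have h0 := grp_nonempty hg j
  have hk : (0:ℝ) < ((grp g j).card : ℝ) := by
    exact_mod_cast Finset.card_pos.mpr h0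
  rw [div_le_div_iff_of_pos_right hk]
  have hma : groupMedian x g j ≤ b := Finset.le_sup' _ (Finset.mem_univ j)
  set S := (grp g j).filter (fun i => x i ≤ b) with hSdef
  set T := (grp g j).filter (fun i => ¬ x i ≤ b) with hTdef
  have hcount := median_count_left x g j h0
  have hsub : (grp g j).filter (fun i => x i ≤ groupMedian x g j) ⊆ S :=
    Finset.monotone_filter_right _ (fun i _ hi => le_trans hi hma)
  have hST : (T.card : ℝ) ≤ S.card := by
    have h1 : S.card + T.card = (grp g j).card :=
      Finset.card_filter_add_card_filter_not _
    have h2 : ((grp g j).filter (fun i => x i ≤ groupMedian x g j)).card ≤ S.card :=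
      Finset.card_le_card hsub
    have : T.card ≤ S.card := by omega
    exact_mod_cast this
  have hsplitA : (∑ i ∈ S, |b - x i|) + (∑ i ∈ T, |b - x i|) = ∑ i ∈ grp g j, |b - x i| :=
    Finset.sum_filter_add_sum_filter_not _ _ _
  have hsplitZ : (∑ i ∈ S, |z - x i|) + (∑ i ∈ T, |z - x i|) = ∑ i ∈ grp g j, |z - x i| :=
    Finset.sum_filter_add_sum_filter_not _ _ _
  have hSsum : (∑ i ∈ S, |b - x i|) + S.card * (z - b) ≤ ∑ i ∈ S, |z - x i| := by
    have : (∑ i ∈ S, |b - x i|) + S.card * (z - b) = ∑ i ∈ S, (|b - x i| + (z - b)) := by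
      rw [Finset.sum_add_distrib, Finset.sum_const, nsmul_eq_mul]
    rw [this]
    apply Finset.sum_le_sum
    intro i hi
    have hx : x i ≤ b := (Finset.mem_filter.mp hi).2
    rw [abs_of_nonneg (by linarith), abs_of_nonneg (by linarith)]
    linarith
  have hTsum : (∑ i ∈ T, |b - x i|) ≤ (∑ i ∈ T, |z - x i|) + T.card * (z - b) := by
    have : (∑ i ∈ T, |z - x i|) + T.card * (z - b) = ∑ i ∈ T, (|z - x i| + (z - b)) := by
      rw [Finset.sum_add_distrib, Finset.sum_const, nsmul_eq_mul]
    rw [this]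
    apply Finset.sum_le_sum
    intro i _
    calc |b - x i| = |(z - x i) + (b - z)| := by ring_nf
      _ ≤ |z - x i| + |b - z| := abs_add_le _ _
      _ = |z - x i| + (z - b) := by
          rw [abs_of_nonpos (show b - z ≤ 0 by linarith)]; ring
  nlinarith [sub_nonneg.mpr hz]

end AUX

/-- NRM has approximation ratio at most 2 for the maximum average group cost. -/
theorem stmt12 [NeZero m] (x : Fin n → ℝ) (g : Fin n → Fin m)
    (hg : Function.Surjective g) (ystar : ℝ)
    (hopt : ∀ z : ℝ, magc x g ystar ≤ magc x g z) :
    1/4 * magc x g (xml x g) + 1/2 * magc x g ((xml x g + xmr x g) / 2) +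
        1/4 * magc x g (xmr x g) ≤ 2 * magc x g ystar := by
  set a := xml x g with ha
  set b := xmr x g with hb
  have hab : a ≤ b := by
    have j0 : Fin m := Classical.arbitrary (Fin m)
    calc a ≤ groupMedian x g j0 := Finset.inf'_le _ (Finset.mem_univ j0)
      _ ≤ b := Finset.le_sup' _ (Finset.mem_univ j0)
  set t := ystar with ht
  set s : ℝ := max a (min t b) with hsdef
  have hsa : a ≤ s := le_max_left _ _
  have hsb : s ≤ b := max_le hab (min_le_right _ _)
  have hms : magc x g s ≤ magc x g t := by
    rcases le_total t a with h1 | h1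
    · have : s = a := by
        rw [hsdef]
        rw [min_eq_left (le_trans h1 hab)]
        exact max_eq_left h1
      rw [this]
      exact magc_anti_left x hg h1
    · rcases le_total b t with h2 | h2
      · have : s = b := by
          rw [hsdef, min_eq_right h2]
          exact max_eq_right hab
        rw [this]
        exact magc_anti_right x hg h2
      · have : s = t := by
          rw [hsdef, min_eq_left h2]
          exact max_eq_right h1
        rw [this]
  have hOs : magc x g s ≤ magc x g ystar := hms
  have hlow1 : (b - s) / 2 ≤ magc x g s := magc_ge_right x hg s
  have hlow2 : (s - a) / 2 ≤ magc x g s := magc_ge_left x hg s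
  have hlipa : magc x g a ≤ magc x g s + |a - s| := magc_lip x hg s a
  have hlipb : magc x g b ≤ magc x g s + |b - s| := magc_lip x hg s b
  have hlipm : magc x g ((a + b)/2) ≤ magc x g s + |(a + b)/2 - s| := magc_lip x hg s _
  rw [abs_of_nonpos (by linarith)] at hlipa
  rw [abs_of_nonneg (by linarith)] at hlipb
  rcases le_total s ((a + b)/2) with h | h
  · rw [abs_of_nonneg (by linarith)] at hlipm
    linarith
  · rw [abs_of_nonpos (by linarith)] at hlipm
    linarith
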